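/- Let n ≥ 2 and k̂ ≥ 1/8. The volumetric exponentiated Hencky energy F ↦ exp(k̂·(log det F)²) is rank-one convex on GL⁺(n): for every F ∈ GL⁺(n) and all ξ, η ∈ ℝⁿ, the map t ↦ exp(k̂·(log det(F + t·ξ⊗η))²) is convex on every interval I ⊆ ℝ such that det(F + t·ξ⊗η) > 0 for all t ∈ I. -/

import Mathlib

open Matrix Real

lemma expHencky_det_affine {n : ℕ} (F : Matrix (Fin n) (Fin n) ℝ) (hF : 0 < F.det)
    (ξ η : Fin n → ℝ) (t : ℝ) :
    (F + t • Matrix.vecMulVec ξ η).det = F.det + t * (F.det * (η ⬝ᵥ F⁻¹ *ᵥ ξ)) := by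
  have hu : IsUnit F.det := (isUnit_iff_ne_zero).2 hF.ne'
  rw [Matrix.vecMulVec_eq (Fin 1), ← Matrix.smul_mul, ← Matrix.replicateCol_smul,
    Matrix.det_add_replicateCol_mul_replicateRow hu]
  simp [Matrix.det_unique, Matrix.add_apply, Matrix.mul_apply, Matrix.replicateRow_apply, Matrix.replicateCol_apply,
    Matrix.mulVec, dotProduct, Finset.mul_sum, Finset.sum_mul]
  rw [mul_add, mul_one, Finset.mul_sum]
  congr 1
  rw [Finset.sum_comm]
  refine Finset.sum_congr rfl fun i _ => ?_
  rw [Finset.mul_sum]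
  exact Finset.sum_congr rfl fun j _ => by ring

lemma expHencky_convexOn {k : ℝ} (hk : 1 / 8 ≤ k) :
    ConvexOn ℝ (Set.Ioi (0:ℝ)) (fun s => Real.exp (k * Real.log s ^ 2)) := by
  have hk0 : (0:ℝ) < k := lt_of_lt_of_le (by norm_num) hk
  have hd1 : ∀ {s : ℝ}, 0 < s →
      HasDerivAt (fun s => Real.exp (k * Real.log s ^ 2))
        (Real.exp (k * Real.log s ^ 2) * (2 * k * (Real.log s * s⁻¹))) s := by
    intro s hs
    have hl := Real.hasDerivAt_log hs.ne'
    have h := (((hl.pow 2).const_mul k).exp)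
    convert h using 1
    · funext x; simp only [Pi.pow_apply]
    · simp only [Pi.pow_apply]; push_cast; ring
  have hd2 : ∀ {s : ℝ}, 0 < s →
      HasDerivAt (fun s => Real.exp (k * Real.log s ^ 2) * (2 * k * (Real.log s * s⁻¹)))
        (Real.exp (k * Real.log s ^ 2) * s⁻¹ ^ 2 *
          ((2 * k * Real.log s - 1 / 2) ^ 2 + (2 * k - 1 / 4))) s := by
    intro s hs
    have hl := Real.hasDerivAt_log hs.ne'
    have hinv := hasDerivAt_inv hs.ne'
    have h := (hd1 hs).mul (((hl.mul hinv)).const_mul (2 * k))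
    refine h.congr_deriv ?_
    have hs2 : (s ^ 2)⁻¹ = s⁻¹ ^ 2 := by rw [inv_pow]
    simp only [Pi.mul_apply]
    field_simp
    ring
  refine convexOn_of_hasDerivWithinAt2_nonneg (f' := fun s =>
      Real.exp (k * Real.log s ^ 2) * (2 * k * (Real.log s * s⁻¹)))
    (f'' := fun s => Real.exp (k * Real.log s ^ 2) * s⁻¹ ^ 2 *
      ((2 * k * Real.log s - 1 / 2) ^ 2 + (2 * k - 1 / 4))) (convex_Ioi 0)
    (fun s hs => ((hd1 hs).continuousAt.continuousWithinAt)) ?_ ?_ ?_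
  · rw [interior_Ioi]
    exact fun x hx => (hd1 hx).hasDerivWithinAt
  · rw [interior_Ioi]
    exact fun x hx => (hd2 hx).hasDerivWithinAt
  · rw [interior_Ioi]
    intro x hx
    have h1 : (0:ℝ) ≤ (2 * k * Real.log x - 1 / 2) ^ 2 + (2 * k - 1 / 4) := by nlinarith
    positivity

/-- The volumetric exponentiated Hencky energy `F ↦ exp(k̂·(log det F)²)` is
rank-one convex on `GL⁺(n)` for `k̂ ≥ 1/8`. -/
theorem volumetric_exp_Hencky_rankOneConvex (n : ℕ) (hn : 2 ≤ n) (khat : ℝ)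
    (hkhat : 1 / 8 ≤ khat)
    (F : Matrix (Fin n) (Fin n) ℝ) (hF : 0 < F.det)
    (ξ η : Fin n → ℝ) (I : Set ℝ) (hI : Convex ℝ I)
    (hdet : ∀ t ∈ I, 0 < (F + t • Matrix.vecMulVec ξ η).det) :
    ConvexOn ℝ I
      (fun t => Real.exp (khat * Real.log (F + t • Matrix.vecMulVec ξ η).det ^ 2)) := by
  set c : ℝ := F.det * (η ⬝ᵥ F⁻¹ *ᵥ ξ) with hc
  set g : ℝ →ᵃ[ℝ] ℝ := AffineMap.lineMap F.det (F.det + c) with hg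
  have hgap : ∀ t : ℝ, g t = F.det + t * c := by
    intro t
    simp [hg, AffineMap.lineMap_apply]
    ring
  have hde : ∀ t : ℝ, (F + t • Matrix.vecMulVec ξ η).det = g t := by
    intro t
    rw [hgap t, hc]
    exact expHencky_det_affine F hF ξ η t
  have hcomp := (expHencky_convexOn hkhat).comp_affineMap g
  have hsub : I ⊆ g ⁻¹' Set.Ioi 0 := by
    intro t ht
    have := hdet t ht
    rw [hde t] at this
    exact this
  have hfin := hcomp.subset hsub hI
  have hfe : (fun t => Real.exp (khat * Real.log (F + t • Matrix.vecMulVec ξ η).det ^ 2)) =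
      ((fun s => Real.exp (khat * Real.log s ^ 2)) ∘ g) := by
    funext t
    simp [Function.comp, hde t]
  rw [hfe]
  exact hfin
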